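/- Let B be the oriented incidence matrix of a tree on n ≥ 2 vertices and let λ denote the smallest eigenvalue of the symmetric matrix BᵀB (λ > 0 since G is a tree). Let ω_m ≤ ω_M be real numbers, c > 0, μ > 0, and suppose κ ≥ 2c(n−1)(ω_M − ω_m)/(λμ²). Then for every v ∈ ℝ^{n-1} with |v_e| ≤ c for every edge e and |v| ≥ μ, and every w ∈ ℝ^n with all entries in [ω_m, ω_M], one has ⟨v, Bᵀw⟩ − κ⟨v, (BᵀB)v⟩ ≤ −(1/2)κλμ². -/

import Mathlib

open Matrix

noncomputable section

/-- Oriented incidence matrix of a graph on `Fin n` with `n-1` oriented edges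
given by `tail` and `head`: column `e` equals `e_{head e} - e_{tail e}`. -/
def incB (n : ℕ) (tail head : Fin (n-1) → Fin n) : Matrix (Fin n) (Fin (n-1)) ℝ :=
  fun i e => (if i = head e then 1 else 0) - (if i = tail e then 1 else 0)

lemma quad_lower {m : ℕ} (A : Matrix (Fin m) (Fin m) ℝ) (hA : A.IsHermitian) (lam : ℝ)
    (hmin : ∀ (μ' : ℝ) (y : Fin m → ℝ), y ≠ 0 → A.mulVec y = μ' • y → lam ≤ μ')
    (v : Fin m → ℝ) : lam * (v ⬝ᵥ v) ≤ v ⬝ᵥ A.mulVec v := by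
  have hsm : (lam • (1 : Matrix (Fin m) (Fin m) ℝ)).IsHermitian := by
    simp [Matrix.IsHermitian, Matrix.conjTranspose_smul]
  set A' : Matrix (Fin m) (Fin m) ℝ := A - lam • (1 : Matrix (Fin m) (Fin m) ℝ) with hA'def
  have hA' : A'.IsHermitian := hA.sub hsm
  have hAeq : A = A' + lam • (1 : Matrix (Fin m) (Fin m) ℝ) := by
    rw [hA'def]; abel
  have hev : ∀ i, 0 ≤ hA'.eigenvalues i := by
    intro i
    have hbne : (hA'.eigenvectorBasis i : EuclideanSpace ℝ (Fin m)) ≠ 0 :=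
      hA'.eigenvectorBasis.orthonormal.ne_zero i
    have hyne : (⇑(hA'.eigenvectorBasis i) : Fin m → ℝ) ≠ 0 := by
      intro h
      apply hbne
      ext j
      exact congrFun h j
    have h1 : A'.mulVec ⇑(hA'.eigenvectorBasis i) = hA'.eigenvalues i • ⇑(hA'.eigenvectorBasis i) :=
      hA'.mulVec_eigenvectorBasis i
    have h2 : A.mulVec ⇑(hA'.eigenvectorBasis i)
        = (hA'.eigenvalues i + lam) • ⇑(hA'.eigenvectorBasis i) := by
      rw [hAeq, Matrix.add_mulVec, h1, Matrix.smul_mulVec, Matrix.one_mulVec, add_smul]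
    have := hmin _ _ hyne h2
    linarith
  have hps : A'.PosSemidef := (Matrix.IsHermitian.posSemidef_iff_eigenvalues_nonneg hA').mpr hev
  have h0 : 0 ≤ v ⬝ᵥ A'.mulVec v := by
    have := hps.re_dotProduct_nonneg v
    simpa using this
  have hexp : v ⬝ᵥ A'.mulVec v = v ⬝ᵥ A.mulVec v - lam * (v ⬝ᵥ v) := by
    rw [hA'def, Matrix.sub_mulVec, dotProduct_sub, Matrix.smul_mulVec, Matrix.one_mulVec,
      dotProduct_smul]
    simp
  linarith [hexp ▸ h0]

/-- With `λ > 0` the smallest eigenvalue of `BᵀB` and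
`κ ≥ 2c(n−1)(ω_M − ω_m)/(λμ²)`, for every `v` with `|v_e| ≤ c` and Euclidean norm
`|v| ≥ μ`, and every `w` with entries in `[ω_m, ω_M]`:
`⟨v, Bᵀw⟩ − κ⟨v, BᵀBv⟩ ≤ −(1/2)κλμ²`. -/
theorem stmt15 (n : ℕ) (hn : 2 ≤ n) (G : SimpleGraph (Fin n)) (hG : G.IsTree)
    (tail head : Fin (n-1) → Fin n)
    (hadj : ∀ e, G.Adj (tail e) (head e))
    (hinj : Function.Injective fun e => s(tail e, head e))
    (hsurj : ∀ p ∈ G.edgeSet, ∃ e, s(tail e, head e) = p)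
    -- lam is the smallest eigenvalue of BᵀB (positive since G is a tree)
    (lam : ℝ)
    (hlam_eig : ∃ y : Fin (n-1) → ℝ, y ≠ 0 ∧
      ((incB n tail head)ᵀ * incB n tail head).mulVec y = lam • y)
    (hlam_min : ∀ (μ' : ℝ) (y : Fin (n-1) → ℝ), y ≠ 0 →
      ((incB n tail head)ᵀ * incB n tail head).mulVec y = μ' • y → lam ≤ μ')
    (hlam_pos : 0 < lam)
    (ωm ωM : ℝ) (hω : ωm ≤ ωM) (c κ μ : ℝ) (hc : 0 < c) (hμ : 0 < μ)
    (hκ : 2 * c * ((n - 1 : ℕ) : ℝ) * (ωM - ωm) / (lam * μ^2) ≤ κ)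
    (v : Fin (n-1) → ℝ) (hv : ∀ e, |v e| ≤ c)
    (hvnorm : μ ≤ Real.sqrt (∑ e, (v e)^2))
    (w : Fin n → ℝ) (hw : ∀ i, w i ∈ Set.Icc ωm ωM) :
    v ⬝ᵥ ((incB n tail head)ᵀ.mulVec w)
      - κ * (v ⬝ᵥ ((incB n tail head)ᵀ * incB n tail head).mulVec v)
      ≤ -(1/2) * κ * lam * μ^2 := by
  set B := incB n tail head with hB
  have hA : (Bᵀ * B).IsHermitian := by
    have := Matrix.isHermitian_conjTranspose_mul_self B
    simpa using this
  have key : lam * (v ⬝ᵥ v) ≤ v ⬝ᵥ (Bᵀ * B).mulVec v :=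
    quad_lower (Bᵀ * B) hA lam hlam_min v
  have hT : (∑ e, (v e)^2) = v ⬝ᵥ v := by
    simp [dotProduct, pow_two]
  have hTnn : (0:ℝ) ≤ ∑ e, (v e)^2 := Finset.sum_nonneg fun e _ => sq_nonneg _
  have hμ2 : μ^2 ≤ v ⬝ᵥ v := by
    rw [← hT]
    have := pow_le_pow_left₀ hμ.le hvnorm 2
    rwa [Real.sq_sqrt hTnn] at this
  have hcol : ∀ e, (Bᵀ.mulVec w) e = w (head e) - w (tail e) := by
    intro e
    simp [hB, Matrix.mulVec, dotProduct, incB, sub_mul, Finset.sum_sub_distrib, ite_mul]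
  have hT1 : v ⬝ᵥ Bᵀ.mulVec w ≤ c * ((n-1 : ℕ) : ℝ) * (ωM - ωm) := by
    have hterm : ∀ e ∈ Finset.univ, v e * (Bᵀ.mulVec w) e ≤ c * (ωM - ωm) := by
      intro e _
      rw [hcol e]
      have h1 := (hw (head e)).1
      have h2 := (hw (head e)).2
      have h3 := (hw (tail e)).1
      have h4 := (hw (tail e)).2
      have habs : |w (head e) - w (tail e)| ≤ ωM - ωm := by
        rw [abs_le]; constructor <;> linarith
      calc v e * (w (head e) - w (tail e)) ≤ |v e * (w (head e) - w (tail e))| := le_abs_self _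
        _ = |v e| * |w (head e) - w (tail e)| := abs_mul _ _
        _ ≤ c * (ωM - ωm) := mul_le_mul (hv e) habs (abs_nonneg _) hc.le
    calc v ⬝ᵥ Bᵀ.mulVec w = ∑ e, v e * (Bᵀ.mulVec w) e := rfl
      _ ≤ ∑ _e : Fin (n-1), c * (ωM - ωm) := Finset.sum_le_sum hterm
      _ = ((n-1 : ℕ) : ℝ) * (c * (ωM - ωm)) := by
          rw [Finset.sum_const, Finset.card_univ, Fintype.card_fin, nsmul_eq_mul]
      _ = c * ((n-1 : ℕ) : ℝ) * (ωM - ωm) := by ring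
  have hden : 0 < lam * μ^2 := mul_pos hlam_pos (by positivity)
  have h2C : 2 * c * ((n-1 : ℕ) : ℝ) * (ωM - ωm) ≤ κ * (lam * μ^2) :=
    (div_le_iff₀ hden).mp hκ
  have hκ0 : 0 ≤ κ := by
    have hnum : 0 ≤ 2 * c * ((n-1 : ℕ) : ℝ) * (ωM - ωm) :=
      mul_nonneg (by positivity) (sub_nonneg.mpr hω)
    have : (0:ℝ) ≤ 2 * c * ((n-1 : ℕ) : ℝ) * (ωM - ωm) / (lam * μ^2) :=
      div_nonneg hnum hden.le
    linarith
  have hQ1 : κ * (lam * (v ⬝ᵥ v)) ≤ κ * (v ⬝ᵥ (Bᵀ * B).mulVec v) :=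
    mul_le_mul_of_nonneg_left key hκ0
  have hQ2 : (κ * lam) * μ^2 ≤ (κ * lam) * (v ⬝ᵥ v) :=
    mul_le_mul_of_nonneg_left hμ2 (mul_nonneg hκ0 hlam_pos.le)
  nlinarith [hT1, hQ1, hQ2, h2C]
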